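/- arXiv:1905.09149 — 3 statements merged into one kernel-verified Lean document; each statement's English description precedes it below -/
import Mathlib

section
/- Suppose J is invertible with ‖J⁻¹‖ ≤ κ and ‖J⁻¹F‖ ≤ δ, and let κ_e ≥ κ, δ_e ≥ δ. If ‖G‖ < δ_e/κ_e - δ/κ and ‖J⁻¹E‖ < 1 - κ/κ_e, then ‖(J + E)⁻¹(F + G)‖ ≤ δ_e. -/
open scoped Matrix.Norms.L2Operator

/-- If `J` is invertible with `‖J⁻¹‖ ≤ κ` and `‖J⁻¹ F‖ ≤ δ`, `κ_e ≥ κ`, `δ_e ≥ δ`,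
`‖G‖ < δ_e/κ_e - δ/κ` and `‖J⁻¹ E‖ < 1 - κ/κ_e`, then `‖(J + E)⁻¹ (F + G)‖ ≤ δ_e`.
Vector norms are Euclidean, matrix norms are the induced operator norms. -/
theorem stmt2 {n : ℕ} (J E : Matrix (Fin n) (Fin n) ℝ)
    (F G : EuclideanSpace ℝ (Fin n)) (κ κe δ δe : ℝ)
    (hκ : 0 < κ) (hκe : 0 < κe) (hδ : 0 < δ) (hδe : 0 < δe)
    (hκle : κ ≤ κe) (hδle : δ ≤ δe)
    (hJ : IsUnit J) (hJinv : ‖J⁻¹‖ ≤ κ)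
    (hJF : ‖(WithLp.equiv 2 (Fin n → ℝ)).symm (J⁻¹.mulVec F)‖ ≤ δ)
    (hG : ‖G‖ < δe / κe - δ / κ)
    (hE : ‖J⁻¹ * E‖ < 1 - κ / κe) :
    ‖(WithLp.equiv 2 (Fin n → ℝ)).symm ((J + E)⁻¹.mulVec (F + G))‖ ≤ δe := by
  set B : Matrix (Fin n) (Fin n) ℝ := J⁻¹ * E with hBdef
  have hκκe : 0 < κ / κe := div_pos hκ hκe
  have hB1 : ‖-B‖ < 1 := by rw [norm_neg]; linarith
  set u : (Matrix (Fin n) (Fin n) ℝ)ˣ := Units.oneSub (-B) hB1 with hu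
  have huval : (u : Matrix (Fin n) (Fin n) ℝ) = 1 + B := by
    simp [hu, Units.oneSub, sub_neg_eq_add]
  have hJdet : IsUnit J.det := (Matrix.isUnit_iff_isUnit_det J).mp hJ
  have hfac : J + E = J * (u : Matrix (Fin n) (Fin n) ℝ) := by
    rw [huval, mul_add, mul_one, hBdef, ← Matrix.mul_assoc,
      Matrix.mul_nonsing_inv J hJdet, Matrix.one_mul]
  -- inverse of unit norm bound
  have hone : ‖(1 : Matrix (Fin n) (Fin n) ℝ)‖ ≤ 1 := by
    rw [Matrix.cstar_norm_def, map_one]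
    exact ContinuousLinearMap.norm_id_le.trans_eq (by simp)
  have huinv : ‖((u⁻¹ : _ˣ) : Matrix (Fin n) (Fin n) ℝ)‖ ≤ (1 - ‖B‖)⁻¹ := by
    have : ((u⁻¹ : _ˣ) : Matrix (Fin n) (Fin n) ℝ) = ∑' k : ℕ, (-B) ^ k := rfl
    rw [this]
    have := tsum_geometric_le_of_norm_lt_one (-B) hB1
    rw [norm_neg] at this
    linarith
  have hinv : (J + E)⁻¹ = ((u⁻¹ : _ˣ) : Matrix (Fin n) (Fin n) ℝ) * J⁻¹ := by
    rw [hfac, Matrix.mul_inv_rev, Matrix.coe_units_inv]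
  -- rewrite the vector
  have hvec : (J + E)⁻¹.mulVec (F + G)
      = ((u⁻¹ : _ˣ) : Matrix (Fin n) (Fin n) ℝ).mulVec (J⁻¹.mulVec F + J⁻¹.mulVec G) := by
    rw [hinv, ← Matrix.mulVec_mulVec, Matrix.mulVec_add]
  rw [hvec]
  have hx : ‖(WithLp.equiv 2 (Fin n → ℝ)).symm (J⁻¹.mulVec F + J⁻¹.mulVec G)‖
      ≤ δ + κ * ‖G‖ := by
    have h1 : (WithLp.equiv 2 (Fin n → ℝ)).symm (J⁻¹.mulVec F + J⁻¹.mulVec G)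
        = (WithLp.equiv 2 (Fin n → ℝ)).symm (J⁻¹.mulVec F)
          + (WithLp.equiv 2 (Fin n → ℝ)).symm (J⁻¹.mulVec G) := rfl
    rw [h1]
    have h2 : ‖(WithLp.equiv 2 (Fin n → ℝ)).symm (J⁻¹.mulVec G)‖ ≤ κ * ‖G‖ := by
      refine (Matrix.l2_opNorm_mulVec J⁻¹ G).trans ?_
      exact mul_le_mul_of_nonneg_right hJinv (norm_nonneg _)
    calc _ ≤ _ + _ := norm_add_le _ _
      _ ≤ δ + κ * ‖G‖ := add_le_add hJF h2
  have hmain := Matrix.l2_opNorm_mulVec ((u⁻¹ : _ˣ) : Matrix (Fin n) (Fin n) ℝ)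
      ((WithLp.equiv 2 (Fin n → ℝ)).symm (J⁻¹.mulVec F + J⁻¹.mulVec G))
  refine hmain.trans ?_
  have hb0 : 0 ≤ ‖B‖ := norm_nonneg _
  have hblt : ‖B‖ < 1 - κ / κe := hE
  have h1b : 0 < 1 - ‖B‖ := by linarith
  have hg0 : 0 ≤ ‖G‖ := norm_nonneg _
  have step : ‖((u⁻¹ : _ˣ) : Matrix (Fin n) (Fin n) ℝ)‖
      * ‖(WithLp.equiv 2 (Fin n → ℝ)).symm (J⁻¹.mulVec F + J⁻¹.mulVec G)‖
      ≤ (1 - ‖B‖)⁻¹ * (δ + κ * ‖G‖) := by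
    apply mul_le_mul huinv hx (norm_nonneg _) (by positivity)
  refine step.trans ?_
  rw [inv_mul_le_iff₀ h1b]
  -- δ + κ * ‖G‖ ≤ δe * (1 - ‖B‖)
  have hGκ : κ * ‖G‖ ≤ κ * (δe / κe - δ / κ) :=
    mul_le_mul_of_nonneg_left hG.le hκ.le
  have h2 : κ * (δe / κe - δ / κ) = κ * δe / κe - δ := by
    field_simp
  have h3 : κ / κe * δe ≤ (1 - ‖B‖) * δe :=
    mul_le_mul_of_nonneg_right (by linarith) hδe.le
  have h4 : κ / κe * δe = κ * δe / κe := by ring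
  linarith
end

section
/- Let f : ℝ → ℝ be differentiable with derivative f' Lipschitz with constant λ on a convex open set D, let x₀ ∈ D with f'(x₀) ≠ 0, set κ = 1/|f'(x₀)|, δ = |f(x₀)/f'(x₀)|, and h = 2κλδ. If h ≤ 1 and the closed ball of radius t* = (2/h)(1-√(1-h))δ around x₀ is contained in D, then f has a zero in that closed ball. -/
lemma mono_help (a b : ℝ) (hab : a ≤ b) (g g' : ℝ → ℝ)
    (hg : ∀ x ∈ Set.Icc a b, HasDerivAt g (g' x) x)
    (h0 : ∀ x ∈ Set.Icc a b, 0 ≤ g' x) : g a ≤ g b := by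
  have hmono : MonotoneOn g (Set.Icc a b) := by
    apply monotoneOn_of_deriv_nonneg (convex_Icc a b)
    · exact fun x hx => (hg x hx).continuousAt.continuousWithinAt
    · intro x hx
      rw [interior_Icc] at hx
      exact (hg x (Set.Ioo_subset_Icc_self hx)).differentiableAt.differentiableWithinAt
    · intro x hx
      rw [interior_Icc] at hx
      rw [(hg x (Set.Ioo_subset_Icc_self hx)).deriv]
      exact h0 x (Set.Ioo_subset_Icc_self hx)
  exact hmono (Set.left_mem_Icc.2 hab) (Set.right_mem_Icc.2 hab) hab

-- lower Taylor bound, a ≤ b, expand at a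
lemma taylor_lower (f f' : ℝ → ℝ) (lam a b : ℝ) (hab : a ≤ b)
    (hf : ∀ x ∈ Set.Icc a b, HasDerivAt f (f' x) x)
    (hlip : ∀ x ∈ Set.Icc a b, |f' x - f' a| ≤ lam * |x - a|) :
    -(lam * (b - a)^2 / 2) ≤ f b - f a - f' a * (b - a) := by
  have key : (fun x => f x - f' a * x + lam * (x - a)^2 / 2) a ≤
      (fun x => f x - f' a * x + lam * (x - a)^2 / 2) b := by
    refine mono_help a b hab (fun x => f x - f' a * x + lam * (x - a) ^ 2 / 2) (fun x => f' x - f' a + lam * (x - a)) ?_ ?_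
    · intro x hx
      have := ((hf x hx).sub ((hasDerivAt_id x).const_mul (f' a))).add
        ((((hasDerivAt_id x).sub_const a).pow 2).const_mul lam |>.div_const 2)
      refine this.congr_deriv ?_
      simp only [id]
      ring
    · intro x hx
      have h1 := hlip x hx
      have h2 : |x - a| = x - a := abs_of_nonneg (by linarith [hx.1])
      rw [h2] at h1
      show 0 ≤ f' x - f' a + lam * (x - a)
      linarith [(abs_le.1 h1).1]
  simp only at key
  nlinarith [key]

lemma taylor_abs_of_le (f f' : ℝ → ℝ) (lam a b : ℝ) (hab : a ≤ b)
    (hf : ∀ x ∈ Set.Icc a b, HasDerivAt f (f' x) x)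
    (hlip : ∀ x ∈ Set.Icc a b, |f' x - f' a| ≤ lam * |x - a|) :
    |f b - f a - f' a * (b - a)| ≤ lam * (b - a)^2 / 2 := by
  have lower := taylor_lower f f' lam a b hab hf hlip
  have upper := taylor_lower (fun x => -f x) (fun x => -f' x) lam a b hab
    (fun x hx => (hf x hx).neg)
    (fun x hx => by
      rw [show -f' x - -f' a = -(f' x - f' a) by ring, abs_neg]; exact hlip x hx)
  rw [abs_le]
  constructor <;> nlinarith

lemma taylor_abs (f f' : ℝ → ℝ) (lam a b : ℝ)
    (hf : ∀ x ∈ Set.uIcc a b, HasDerivAt f (f' x) x)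
    (hlip : ∀ x ∈ Set.uIcc a b, |f' x - f' a| ≤ lam * |x - a|) :
    |f b - f a - f' a * (b - a)| ≤ lam * (b - a)^2 / 2 := by
  rcases le_total a b with hab | hab
  · rw [Set.uIcc_of_le hab] at hf hlip
    exact taylor_abs_of_le f f' lam a b hab hf hlip
  · rw [Set.uIcc_of_ge hab] at hf hlip
    have hmem : ∀ x ∈ Set.Icc (-a) (-b), -x ∈ Set.Icc b a := by
      intro x hx
      exact ⟨by linarith [hx.2], by linarith [hx.1]⟩
    have key := taylor_abs_of_le (fun x => f (-x)) (fun x => -f' (-x)) lam (-a) (-b)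
      (by linarith)
      (fun x hx => by
        have := (hf (-x) (hmem x hx)).comp x (hasDerivAt_neg x)
        simpa [mul_comm, Function.comp_def] using this)
      (fun x hx => by
        simp only [neg_neg]
        rw [show -f' (-x) - -f' a = -(f' (-x) - f' a) by ring, abs_neg,
          show x - -a = -((-x) - a) by ring, abs_neg]
        exact hlip (-x) (hmem x hx))
    simp only [neg_neg] at key
    have e1 : f b - f a - -f' a * (-b - -a) = f b - f a - f' a * (b - a) := by ring
    have e2 : (-b - -a)^2 = (b - a)^2 := by ring
    rw [e1, e2] at key
    exact key


set_option maxHeartbeats 1000000 in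
/-- One-dimensional Newton–Kantorovich theorem: if `f : ℝ → ℝ` has a derivative `f'`
on an open convex set `D`, `f'` is `λ`-Lipschitz on `D`, `x₀ ∈ D`, `f'(x₀) ≠ 0`,
`κ = 1/|f'(x₀)|`, `δ = |f(x₀)/f'(x₀)|`, `h = 2κλδ ≤ 1`, and the closed ball of radius
`t* = (2/h)(1-√(1-h))δ` about `x₀` is contained in `D`, then `f` has a zero in that ball. -/
theorem stmt7 (D : Set ℝ) (hD : IsOpen D) (hDconv : Convex ℝ D)
    (f f' : ℝ → ℝ) (hf : ∀ x ∈ D, HasDerivAt f (f' x) x)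
    (lam : ℝ) (hlam : 0 < lam)
    (hlip : ∀ x ∈ D, ∀ y ∈ D, |f' x - f' y| ≤ lam * |x - y|)
    (x₀ : ℝ) (hx₀ : x₀ ∈ D) (hf' : f' x₀ ≠ 0)
    (κ δ h tstar : ℝ)
    (hκ : κ = 1 / |f' x₀|) (hδ : δ = |f x₀ / f' x₀|)
    (hh : h = 2 * κ * lam * δ) (hle : h ≤ 1)
    (htstar : tstar = (2 / h) * (1 - Real.sqrt (1 - h)) * δ)
    (hball : Metric.closedBall x₀ tstar ⊆ D) :
    ∃ x ∈ Metric.closedBall x₀ tstar, f x = 0 := by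
  by_cases h0 : f x₀ = 0
  · refine ⟨x₀, ?_, h0⟩
    have : δ = 0 := by simp [hδ, h0]
    simp [htstar, this]
  -- main case
  set A := |f' x₀| with hA
  clear_value A
  have hApos : 0 < A := by rw [hA]; exact abs_pos.2 hf'
  have hδpos : 0 < δ := by
    rw [hδ]
    exact abs_pos.2 (div_ne_zero h0 hf')
  have hhpos : 0 < h := by
    rw [hh, hκ]
    positivity
  have h1h : 0 ≤ 1 - h := by linarith
  set r := Real.sqrt (1 - h) with hr
  clear_value r
  have hr2 : r ^ 2 = 1 - h := by rw [hr]; exact Real.sq_sqrt h1h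
  have hr0 : 0 ≤ r := by rw [hr]; exact Real.sqrt_nonneg _
  have hr1 : r ≤ 1 := by
    rw [hr]
    exact (Real.sqrt_le_sqrt (by linarith : 1 - h ≤ 1)).trans_eq Real.sqrt_one
  -- tstar = A (1 - r) / lam
  have hA0 : A ≠ 0 := hApos.ne'
  have hlam0 : lam ≠ 0 := hlam.ne'
  have hδ0 : δ ≠ 0 := hδpos.ne'
  have htstar' : tstar = A * (1 - r) / lam := by
    rw [htstar, hh, hκ]
    field_simp
  have htpos : 0 ≤ tstar := by
    rw [htstar']
    exact div_nonneg (mul_nonneg hApos.le (by linarith)) hlam.le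
  -- key quadratic identity
  have habs : |f x₀| = A * δ := by
    rw [hδ, abs_div, ← hA]
    field_simp [mul_comm]
  have hhA : h * A = 2 * lam * δ := by
    rw [hh, hκ]
    field_simp
  have e : lam * tstar = A * (1 - r) := by
    rw [htstar']
    field_simp
  have key2 : 2 * lam * (lam * tstar ^ 2 / 2 - A * tstar + A * δ) = 0 := by
    linear_combination (lam * tstar + A * (1 - r) - 2 * A) * e + A ^ 2 * hr2 - A * hhA
  have key : lam * tstar ^ 2 / 2 - A * tstar + A * δ = 0 := by
    rcases mul_eq_zero.1 key2 with hc | hc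
    · exact absurd hc (by positivity)
    · exact hc
  -- the test point
  set s : ℝ := f x₀ / f' x₀ / δ with hs
  clear_value s
  have hsδ : f' x₀ * (s * δ) = f x₀ := by
    rw [hs]
    field_simp
  have hs1 : |s| = 1 := by
    rw [hs, abs_div, ← hδ, abs_of_pos hδpos, div_self hδpos.ne']
  set y : ℝ := x₀ - tstar * s with hy
  clear_value y
  have hyx : |y - x₀| = tstar := by
    rw [hy]
    rw [show x₀ - tstar * s - x₀ = -(tstar * s) by ring, abs_neg, abs_mul, hs1,
      mul_one, abs_of_nonneg htpos]
  have hymem : y ∈ Metric.closedBall x₀ tstar := by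
    rw [Metric.mem_closedBall, Real.dist_eq, hyx]
  have hx₀mem : x₀ ∈ Metric.closedBall x₀ tstar := Metric.mem_closedBall_self htpos
  have hsub : Set.uIcc y x₀ ⊆ Metric.closedBall x₀ tstar :=
    ((convex_closedBall x₀ tstar).ordConnected).uIcc_subset hymem hx₀mem
  have hsubD : Set.uIcc y x₀ ⊆ D := hsub.trans hball
  -- Taylor bound
  have htay := taylor_abs f f' lam x₀ y
    (fun x hx => hf x (hsubD (Set.uIcc_comm x₀ y ▸ hx)))
    (fun x hx => hlip x (hsubD (Set.uIcc_comm x₀ y ▸ hx)) x₀ (hsubD Set.right_mem_uIcc))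
  have hsq : (y - x₀) ^ 2 = tstar ^ 2 := by
    rw [← sq_abs, hyx]
  rw [hsq] at htay
  -- compute f' x₀ * (y - x₀)
  have hstep : f' x₀ * (y - x₀) = -(tstar / δ) * f x₀ := by
    rw [hy, ← hsδ]
    field_simp
    ring
  -- sign condition
  have hsign : f y * f x₀ ≤ 0 := by
    set E := f y - f x₀ - f' x₀ * (y - x₀) with hE
    clear_value E
    have hEb : |E| ≤ lam * tstar ^ 2 / 2 := htay
    have hEf : E * f x₀ ≤ lam * tstar ^ 2 / 2 * |f x₀| := by
      calc E * f x₀ ≤ |E * f x₀| := le_abs_self _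
        _ = |E| * |f x₀| := abs_mul _ _
        _ ≤ lam * tstar ^ 2 / 2 * |f x₀| := by
            apply mul_le_mul_of_nonneg_right hEb (abs_nonneg _)
    have hfy : f y = f x₀ - (tstar / δ) * f x₀ + E := by
      rw [hE, hstep]; ring
    have hsqf : f x₀ * f x₀ = (A * δ) * (A * δ) := by
      rw [← habs]; rw [abs_mul_abs_self]
    rw [hfy]
    have hδne := hδpos.ne'
    have expand : (f x₀ - tstar / δ * f x₀ + E) * f x₀
        = f x₀ * f x₀ * (1 - tstar / δ) + E * f x₀ := by ring
    rw [expand, hsqf]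
    rw [habs] at hEf
    have : (A * δ) * (A * δ) * (1 - tstar / δ) = A * δ * (A * δ - A * tstar) := by
      field_simp
    rw [this]
    have key' : A * δ * (lam * tstar ^ 2 / 2 - A * tstar + A * δ) = 0 := by
      rw [key]; ring
    linarith [key', hEf]
  -- IVT
  have hcont : ContinuousOn f (Set.uIcc y x₀) :=
    fun x hx => (hf x (hsubD hx)).continuousAt.continuousWithinAt
  have h0mem : (0 : ℝ) ∈ Set.uIcc (f y) (f x₀) := by
    rcases mul_nonpos_iff.1 hsign with ⟨h1, h2⟩ | ⟨h1, h2⟩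
    · exact Set.mem_uIcc.2 (Or.inr ⟨h2, h1⟩)
    · exact Set.mem_uIcc.2 (Or.inl ⟨h1, h2⟩)
  obtain ⟨x, hxmem, hxz⟩ := intermediate_value_uIcc hcont h0mem
  exact ⟨x, hsub hxmem, hxz⟩
end

section
/- Under Newton-Kantorovich hypotheses with h = 2κλδ ≤ 1, every Newton iterate x^{v} remains in the ball U(x⁰, t*), where t* = (2/h)(1-√(1-h))δ; in particular the sup norm of the limit x* is bounded by ‖x⁰‖ + t*. -/
set_option maxHeartbeats 1000000

open Set

lemma taylor_quad {X : Type*} [NormedAddCommGroup X] [NormedSpace ℝ X]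
    (D : Set X) (f : X → X) (J : X → X →L[ℝ] X)
    (hf : ∀ x ∈ D, HasFDerivAt f (J x) x)
    (lam : ℝ) (hlam : 0 ≤ lam)
    (hlip : ∀ x ∈ D, ∀ y ∈ D, ‖J x - J y‖ ≤ lam * ‖x - y‖)
    {x y : X} (hseg : segment ℝ x y ⊆ D) :
    ‖f y - f x - J x (y - x)‖ ≤ lam / 2 * ‖y - x‖ ^ 2 := by
  set γ : ℝ → X := fun θ => x + θ • (y - x) with hγ
  have hγ0 : γ 0 = x := by simp [hγ]
  have hγmem : ∀ θ ∈ Icc (0:ℝ) 1, γ θ ∈ D := by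
    intro θ hθ
    apply hseg
    rw [segment_eq_image']
    exact ⟨θ, hθ, rfl⟩
  set g : ℝ → X := fun θ => f (γ θ) - θ • (J x (y - x)) - f x with hg
  have hderiv : ∀ θ ∈ Icc (0:ℝ) 1,
      HasDerivAt g ((J (γ θ) - J x) (y - x)) θ := by
    intro θ hθ
    have h1 : HasDerivAt γ (y - x) θ := by
      exact (((hasDerivAt_id θ).smul_const (y - x)).const_add x).congr_deriv (one_smul _ _)
    have h2 : HasDerivAt (fun θ => f (γ θ)) (J (γ θ) (y - x)) θ :=
      (hf _ (hγmem θ hθ)).comp_hasDerivAt θ h1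
    have h3 : HasDerivAt (fun θ : ℝ => θ • (J x (y - x))) (J x (y - x)) θ := by
      simpa using (hasDerivAt_id θ).smul_const (J x (y - x))
    simpa [hg] using (h2.sub h3).sub_const (f x)
  have hcont : ContinuousOn g (Icc (0:ℝ) 1) := fun θ hθ =>
    (hderiv θ hθ).continuousAt.continuousWithinAt
  have hder' : ∀ θ ∈ Ico (0:ℝ) 1,
      HasDerivWithinAt g ((J (γ θ) - J x) (y - x)) (Ici θ) θ := fun θ hθ =>
    (hderiv θ (Ico_subset_Icc_self hθ)).hasDerivWithinAt
  have hB0 : ‖g 0‖ ≤ lam * (0:ℝ) ^ 2 * ‖y - x‖ ^ 2 / 2 := by simp [hg, hγ0]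
  have hBd : ∀ θ : ℝ, HasDerivAt (fun θ : ℝ => lam * θ ^ 2 * ‖y - x‖ ^ 2 / 2)
      (lam * θ * ‖y - x‖ ^ 2) θ := by
    intro θ
    have := (((hasDerivAt_pow 2 θ).const_mul lam).mul_const (‖y - x‖ ^ 2)).div_const 2
    refine this.congr_deriv ?_
    simp; ring
  have hbound : ∀ θ ∈ Ico (0:ℝ) 1,
      ‖(J (γ θ) - J x) (y - x)‖ ≤ lam * θ * ‖y - x‖ ^ 2 := by
    intro θ hθ
    have h1 : ‖(J (γ θ) - J x) (y - x)‖ ≤ ‖J (γ θ) - J x‖ * ‖y - x‖ :=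
      (J (γ θ) - J x).le_opNorm _
    have h2 : ‖J (γ θ) - J x‖ ≤ lam * ‖γ θ - x‖ :=
      hlip _ (hγmem θ (Ico_subset_Icc_self hθ)) _ (hγ0 ▸ hγmem 0 (by norm_num))
    have h3 : ‖γ θ - x‖ = θ * ‖y - x‖ := by
      simp [hγ, norm_smul, abs_of_nonneg hθ.1]
    calc ‖(J (γ θ) - J x) (y - x)‖ ≤ (lam * (θ * ‖y - x‖)) * ‖y - x‖ := by
          refine h1.trans ?_
          have := mul_le_mul_of_nonneg_right (h3 ▸ h2) (norm_nonneg (y - x))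
          linarith
      _ = lam * θ * ‖y - x‖ ^ 2 := by ring
  have key := image_norm_le_of_norm_deriv_right_le_deriv_boundary hcont hder' hB0 hBd hbound
    (Set.right_mem_Icc.2 zero_le_one)
  have hg1 : g 1 = f y - f x - J x (y - x) := by
    simp [hg, hγ]
    abel
  rw [hg1] at key
  calc ‖f y - f x - J x (y - x)‖ ≤ lam * 1 ^ 2 * ‖y - x‖ ^ 2 / 2 := key
    _ = lam / 2 * ‖y - x‖ ^ 2 := by ring

open Set

noncomputable def nkSeq (a δ : ℝ) : ℕ → ℝ
  | 0 => 0
  | v + 1 => nkSeq a δ v +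
      (a * nkSeq a δ v ^ 2 / 2 - nkSeq a δ v + δ) / (1 - a * nkSeq a δ v)

lemma nkSeq_zero (a δ : ℝ) : nkSeq a δ 0 = 0 := rfl

lemma nkSeq_succ (a δ : ℝ) (v : ℕ) : nkSeq a δ (v + 1) = nkSeq a δ v +
    (a * nkSeq a δ v ^ 2 / 2 - nkSeq a δ v + δ) / (1 - a * nkSeq a δ v) := rfl

lemma nkSeq_props (a δ ts : ℝ) (ha : 0 < a) (hδ : 0 < δ)
    (hts : a * ts ^ 2 / 2 - ts + δ = 0) (hats : a * ts ≤ 1) :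
    ∀ v : ℕ, 0 ≤ nkSeq a δ v ∧ nkSeq a δ v < ts ∧
      0 ≤ a * nkSeq a δ v ^ 2 / 2 - nkSeq a δ v + δ := by
  intro v
  induction v with
  | zero =>
    rw [nkSeq_zero]
    refine ⟨le_refl 0, ?_, by simpa using hδ.le⟩
    nlinarith [mul_nonneg ha.le (sq_nonneg ts)]
  | succ v ih =>
    obtain ⟨h0, hlt, hp⟩ := ih
    set t := nkSeq a δ v with hT
    have hat : a * t < 1 := by nlinarith
    have hpos : 0 < 1 - a * t := by linarith
    set d := (a * t ^ 2 / 2 - t + δ) / (1 - a * t) with hdd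
    have hd : (1 - a * t) * d = a * t ^ 2 / 2 - t + δ := by
      rw [hdd]; field_simp
    have hd0 : 0 ≤ d := div_nonneg hp hpos.le
    have hnext : nkSeq a δ (v + 1) = t + d := by rw [nkSeq_succ]
    refine ⟨by rw [hnext]; linarith, ?_, ?_⟩
    · rw [hnext]
      have hts2 : 0 < (ts - t) ^ 2 := pow_pos (by linarith) 2
      have hkey : (1 - a * t) * d < (1 - a * t) * (ts - t) := by
        nlinarith [mul_pos ha hts2]
      have := (mul_lt_mul_iff_right₀ hpos).1 hkey
      linarith
    · rw [hnext]
      nlinarith [mul_nonneg ha.le (sq_nonneg d)]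


/-- Under the Newton–Kantorovich hypotheses (`λ`-Lipschitz derivative `J` on an open
convex `D`, `‖J(x⁰)⁻¹‖ ≤ κ`, `‖J(x⁰)⁻¹ f(x⁰)‖ ≤ δ`, `h = 2κλδ ≤ 1`, and the closed
ball of radius `t* = (2/h)(1-√(1-h))δ` about `x⁰` contained in `D`), every Newton
iterate `x^v` remains in the closed ball `U(x⁰, t*)`; in particular, any limit `x*` of
the iterates satisfies `‖x*‖ ≤ ‖x⁰‖ + t*`. -/
theorem stmt18 {X : Type*} [NormedAddCommGroup X] [NormedSpace ℝ X] [CompleteSpace X]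
    (D : Set X) (hD : IsOpen D) (hDconv : Convex ℝ D)
    (f : X → X) (J : X → X →L[ℝ] X)
    (hf : ∀ x ∈ D, HasFDerivAt f (J x) x)
    (lam : ℝ) (hlam : 0 < lam)
    (hlip : ∀ x ∈ D, ∀ y ∈ D, ‖J x - J y‖ ≤ lam * ‖x - y‖)
    (x : ℕ → X) (hx0 : x 0 ∈ D)
    (Jinv : X →L[ℝ] X)
    (hJinv : ∀ w : X, Jinv (J (x 0) w) = w ∧ J (x 0) (Jinv w) = w)
    (κ δ h tstar : ℝ) (hκ : 0 < κ) (hδ : 0 < δ)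
    (hκb : ‖Jinv‖ ≤ κ) (hδb : ‖Jinv (f (x 0))‖ ≤ δ)
    (hh : h = 2 * κ * lam * δ) (hle : h ≤ 1)
    (htstar : tstar = (2 / h) * (1 - Real.sqrt (1 - h)) * δ)
    (hball : Metric.closedBall (x 0) tstar ⊆ D)
    (hiter : ∀ v : ℕ, J (x v) (x (v + 1) - x v) = -f (x v)) :
    (∀ v : ℕ, x v ∈ Metric.closedBall (x 0) tstar) ∧
      ∀ xstar : X, Filter.Tendsto x Filter.atTop (nhds xstar) →
        ‖xstar‖ ≤ ‖x 0‖ + tstar := by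
  set a : ℝ := κ * lam with ha_def
  have ha : 0 < a := mul_pos hκ hlam
  have hh0 : 0 < h := by rw [hh]; positivity
  set s : ℝ := Real.sqrt (1 - h) with hs_def
  have hs0 : 0 ≤ s := Real.sqrt_nonneg _
  have hs2 : s ^ 2 = 1 - h := Real.sq_sqrt (by linarith)
  have hs1 : s ≤ 1 := by nlinarith
  have hts_eq : tstar = (1 - s) / a := by
    rw [htstar, hh]
    field_simp [ha_def]
    ring
  have hats : a * tstar ≤ 1 := by
    rw [hts_eq]
    field_simp
    linarith
  have hpts : a * tstar ^ 2 / 2 - tstar + δ = 0 := by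
    have hat : a * tstar = 1 - s := by rw [hts_eq]; field_simp
    have h2aδ : 2 * a * δ = h := by rw [hh, ha_def]; ring
    have h2 : 2 * a * (a * tstar ^ 2 / 2 - tstar + δ) = 0 := by
      have : a * tstar * (a * tstar) - 2 * (a * tstar) + 2 * a * δ = 0 := by
        rw [hat, h2aδ]; nlinarith
      nlinarith [this]
    have := mul_eq_zero.1 h2
    rcases this with h' | h'
    · linarith
    · exact h'
  have props := nkSeq_props a δ tstar ha hδ hpts hats
  -- main induction
  have key : ∀ v : ℕ, ‖x v - x 0‖ ≤ nkSeq a δ v ∧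
      ‖Jinv (f (x v))‖ ≤ a * nkSeq a δ v ^ 2 / 2 - nkSeq a δ v + δ := by
    intro v
    induction v with
    | zero => exact ⟨by simp [nkSeq_zero], by rw [nkSeq_zero]; simpa using hδb⟩
    | succ v ih =>
      obtain ⟨hxv, hfv⟩ := ih
      obtain ⟨h0, hlt, hp⟩ := props v
      obtain ⟨h0', hlt', hp'⟩ := props (v + 1)
      obtain ⟨t, hT⟩ : ∃ t, nkSeq a δ v = t := ⟨_, rfl⟩
      rw [hT] at hxv hfv h0 hlt hp
      have hat : a * t < 1 := by nlinarith
      have hpos : 0 < 1 - a * t := by linarith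
      obtain ⟨d, hdd⟩ : ∃ d, (a * t ^ 2 / 2 - t + δ) / (1 - a * t) = d := ⟨_, rfl⟩
      have hd : (1 - a * t) * d = a * t ^ 2 / 2 - t + δ := by
        rw [← hdd]; field_simp
      have hd0 : 0 ≤ d := by rw [← hdd]; exact div_nonneg hp hpos.le
      have hnext : nkSeq a δ (v + 1) = t + d := by rw [nkSeq_succ, hT, hdd]
      rw [hnext] at h0' hlt' hp' ⊢
      have hmemv : x v ∈ Metric.closedBall (x 0) tstar := by
        rw [Metric.mem_closedBall, dist_eq_norm]
        linarith
      obtain ⟨Δ, hΔ⟩ : ∃ Δ, x (v + 1) - x v = Δ := ⟨_, rfl⟩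
      -- bound on ‖Δ‖
      have hΔeq : Δ = -(Jinv (f (x v))) + Jinv ((J (x 0) - J (x v)) Δ) := by
        have h1 := (hJinv Δ).1
        have h2 : J (x 0) Δ = J (x v) Δ + (J (x 0) - J (x v)) Δ := by
          simp [ContinuousLinearMap.sub_apply]
        calc Δ = Jinv (J (x 0) Δ) := h1.symm
          _ = Jinv (J (x v) Δ + (J (x 0) - J (x v)) Δ) := by rw [← h2]
          _ = Jinv (J (x v) Δ) + Jinv ((J (x 0) - J (x v)) Δ) := map_add _ _ _
          _ = -(Jinv (f (x v))) + Jinv ((J (x 0) - J (x v)) Δ) := by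
              rw [← hΔ, hiter v, map_neg]
      have hJsub : ‖J (x 0) - J (x v)‖ ≤ lam * ‖x v - x 0‖ := by
        have := hlip (x 0) hx0 (x v) (hball hmemv)
        rwa [norm_sub_rev (x 0) (x v)] at this
      have hΔbound : ‖Δ‖ ≤ (a * t ^ 2 / 2 - t + δ) + a * t * ‖Δ‖ := by
        calc ‖Δ‖ = ‖-(Jinv (f (x v))) + Jinv ((J (x 0) - J (x v)) Δ)‖ := by rw [← hΔeq]
          _ ≤ ‖Jinv (f (x v))‖ + ‖Jinv ((J (x 0) - J (x v)) Δ)‖ := by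
              refine (norm_add_le _ _).trans ?_
              simp
          _ ≤ (a * t ^ 2 / 2 - t + δ) + κ * (lam * ‖x v - x 0‖ * ‖Δ‖) := by
              gcongr
              calc ‖Jinv ((J (x 0) - J (x v)) Δ)‖
                  ≤ ‖Jinv‖ * ‖(J (x 0) - J (x v)) Δ‖ := Jinv.le_opNorm _
                _ ≤ κ * (‖J (x 0) - J (x v)‖ * ‖Δ‖) := by
                    gcongr
                    exact (J (x 0) - J (x v)).le_opNorm _
                _ ≤ κ * (lam * ‖x v - x 0‖ * ‖Δ‖) := by gcongr
          _ ≤ (a * t ^ 2 / 2 - t + δ) + a * t * ‖Δ‖ := by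
              rw [ha_def]
              nlinarith [mul_le_mul_of_nonneg_left
                (mul_le_mul_of_nonneg_right hxv (norm_nonneg Δ)) (mul_pos hκ hlam).le]
      have hΔle : ‖Δ‖ ≤ d := by
        rw [← hdd, le_div_iff₀ hpos]
        nlinarith [norm_nonneg Δ]
      have hstep1 : ‖x (v + 1) - x 0‖ ≤ t + d := by
        calc ‖x (v + 1) - x 0‖ = ‖Δ + (x v - x 0)‖ := by rw [← hΔ]; abel_nf
          _ ≤ ‖Δ‖ + ‖x v - x 0‖ := norm_add_le _ _
          _ ≤ t + d := by linarith
      refine ⟨hstep1, ?_⟩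
      -- Taylor estimate
      have hmem1 : x (v + 1) ∈ Metric.closedBall (x 0) tstar := by
        rw [Metric.mem_closedBall, dist_eq_norm]
        linarith
      have hseg : segment ℝ (x v) (x (v + 1)) ⊆ D :=
        subset_trans ((convex_closedBall _ _).segment_subset hmemv hmem1) hball
      have htay := taylor_quad D f J hf lam hlam.le hlip hseg
      rw [hiter v] at htay
      rw [hΔ] at htay
      have htay' : ‖f (x (v + 1))‖ ≤ lam / 2 * ‖Δ‖ ^ 2 := by
        have he : f (x (v + 1)) - f (x v) - -f (x v) = f (x (v + 1)) := by abel
        rwa [he] at htay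
      have hpnext : a * (t + d) ^ 2 / 2 - (t + d) + δ = a / 2 * d ^ 2 := by
        have h9 : a * (t + d) ^ 2 / 2 - (t + d) + δ - a / 2 * d ^ 2
            = (a * t ^ 2 / 2 - t + δ) - (1 - a * t) * d := by ring
        linarith [hd, h9]
      rw [hpnext]
      calc ‖Jinv (f (x (v + 1)))‖ ≤ ‖Jinv‖ * ‖f (x (v + 1))‖ := Jinv.le_opNorm _
        _ ≤ κ * (lam / 2 * ‖Δ‖ ^ 2) := by gcongr
        _ ≤ κ * (lam / 2 * d ^ 2) := by gcongr
        _ = a / 2 * d ^ 2 := by rw [ha_def]; ring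
  have part1 : ∀ v : ℕ, x v ∈ Metric.closedBall (x 0) tstar := by
    intro v
    rw [Metric.mem_closedBall, dist_eq_norm]
    exact (key v).1.trans (props v).2.1.le
  refine ⟨part1, ?_⟩
  intro xstar htend
  have hxs : xstar ∈ Metric.closedBall (x 0) tstar :=
    Metric.isClosed_closedBall.mem_of_tendsto htend (Filter.Eventually.of_forall part1)
  rw [Metric.mem_closedBall, dist_eq_norm] at hxs
  calc ‖xstar‖ = ‖x 0 + (xstar - x 0)‖ := congrArg norm (by abel)
    _ ≤ ‖x 0‖ + ‖xstar - x 0‖ := norm_add_le _ _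
    _ ≤ ‖x 0‖ + tstar := by linarith
end
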